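/- Under the stationary two-sequence k-mer model with L = 4, transition matrix M = exp(tQ) for the Kimura 3-parameter rate matrix Q with parameters α, β, γ > 0 and branch length t ≥ 0, and uniform stationary vector π, one has E[ ∑_{W ∈ [4]^k} (X₁^W − X₂^W)² ] = 2(n − k + 1)·( 1 − ( (1 + e^{−2(α+β)t} + e^{−2(α+γ)t} + e^{−2(β+γ)t})/4 )^k ). -/

import Mathlib

set_option maxHeartbeats 1000000

open Matrix

lemma vecHead_const {n : ℕ} (c : ℝ) : Matrix.vecHead (fun _ : Fin (n+1) => c) = c := rfl
lemma vecTail_const {n : ℕ} (c : ℝ) :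
    Matrix.vecTail (fun _ : Fin (n+1) => c) = fun _ : Fin n => c := rfl

noncomputable def Hmat : Matrix (Fin 4) (Fin 4) ℝ :=
  !![1,1,1,1; 1,1,-1,-1; 1,-1,1,-1; 1,-1,-1,1]

lemma Hmat_mul_Hmat : Hmat * ((1/4 : ℝ) • Hmat) = 1 := by
  ext i j
  fin_cases i <;> fin_cases j <;>
    simp [Hmat, Matrix.mul_apply, Fin.sum_univ_four, Matrix.one_apply]
  all_goals norm_num

lemma Hmat_mul_Hmat' : ((1/4 : ℝ) • Hmat) * Hmat = 1 := by
  ext i j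
  fin_cases i <;> fin_cases j <;>
    simp [Hmat, Matrix.mul_apply, Fin.sum_univ_four, Matrix.one_apply]
  all_goals norm_num

noncomputable def Hunit : (Matrix (Fin 4) (Fin 4) ℝ)ˣ :=
  ⟨Hmat, (1/4 : ℝ) • Hmat, Hmat_mul_Hmat, Hmat_mul_Hmat'⟩

lemma Hunit_val : (↑Hunit : Matrix (Fin 4) (Fin 4) ℝ) = Hmat := rfl
lemma Hunit_inv_val : (↑Hunit⁻¹ : Matrix (Fin 4) (Fin 4) ℝ) = (1/4 : ℝ) • Hmat := rfl

lemma k3p_exp (α β γ t : ℝ) :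
    NormedSpace.exp (t • (!![-(α+β+γ), α, β, γ;
                 α, -(α+β+γ), γ, β;
                 β, γ, -(α+β+γ), α;
                 γ, β, α, -(α+β+γ)] : Matrix (Fin 4) (Fin 4) ℝ))
      = (1/4 : ℝ) • (Hmat * Matrix.diagonal
          ![(1:ℝ), Real.exp (-2*(β+γ)*t), Real.exp (-2*(α+γ)*t), Real.exp (-2*(α+β)*t)]
          * Hmat) := by
  have hconj : t • (!![-(α+β+γ), α, β, γ;
                 α, -(α+β+γ), γ, β;
                 β, γ, -(α+β+γ), α;
                 γ, β, α, -(α+β+γ)] : Matrix (Fin 4) (Fin 4) ℝ)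
      = (↑Hunit : Matrix (Fin 4) (Fin 4) ℝ) * (Matrix.diagonal ![0, -2*(β+γ)*t, -2*(α+γ)*t, -2*(α+β)*t] : Matrix (Fin 4) (Fin 4) ℝ) * (↑Hunit⁻¹ : Matrix (Fin 4) (Fin 4) ℝ) := by
    rw [Hunit_val, Hunit_inv_val]
    ext i j
    fin_cases i <;> fin_cases j <;>
      · simp [Hmat, Matrix.mul_apply, Fin.sum_univ_four, Matrix.diagonal_apply,
          Matrix.smul_apply, Matrix.vecMul_diagonal, Matrix.mulVec_diagonal]
        try ring
  rw [hconj, Matrix.exp_units_conj]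
  have hdiag : NormedSpace.exp (Matrix.diagonal ![0, -2*(β+γ)*t, -2*(α+γ)*t, -2*(α+β)*t])
      = Matrix.diagonal ![(1:ℝ), Real.exp (-2*(β+γ)*t), Real.exp (-2*(α+γ)*t), Real.exp (-2*(α+β)*t)] := by
    rw [Matrix.exp_diagonal]
    have hv : NormedSpace.exp (![0, -2*(β+γ)*t, -2*(α+γ)*t, -2*(α+β)*t] : Fin 4 → ℝ)
        = ![(1:ℝ), Real.exp (-2*(β+γ)*t), Real.exp (-2*(α+γ)*t), Real.exp (-2*(α+β)*t)] := by
      funext i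
      rw [Pi.exp_def]
      fin_cases i <;> simp [← Real.exp_eq_exp_ℝ]
    rw [hv]
  rw [hdiag, Hunit_val, Hunit_inv_val, Matrix.mul_smul]


lemma sum_prod_eval {n : ℕ} {X : Type*} [Fintype X] [DecidableEq X] (g : Fin n → X → ℝ) :
    ∑ ω : Fin n → X, ∏ i, g i (ω i) = ∏ i, ∑ x, g i x := by
  rw [Finset.prod_univ_sum, Fintype.piFinset_univ]

lemma chain_sum (d : ℕ) (hd : 1 ≤ d) (f : Fin 4 → Fin 4 → ℝ)
    (hf : ∀ b, ∑ a, f a b = 4) :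
    ∀ (k : ℕ), (∑ W : Fin k → Fin 4, ∏ j : Fin k,
      (if h : j.1 + d < k then f (W j) (W ⟨j.1 + d, h⟩) else 1)) = 4 ^ k := by
  intro k
  induction k with
  | zero => simp
  | succ k ih =>
    rcases le_or_gt (k+1) d with hkd | hkd
    · have h1 : ∀ W : Fin (k+1) → Fin 4, (∏ j : Fin (k+1),
          (if h : j.1 + d < k+1 then f (W j) (W ⟨j.1 + d, h⟩) else 1)) = 1 := by
        intro W
        apply Finset.prod_eq_one
        intro j _
        rw [dif_neg (by omega)]
      simp only [h1]
      simp [Finset.card_univ]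
    · have hdk : d ≤ k := by omega
      rw [← Equiv.sum_comp (Fin.consEquiv (fun _ : Fin (k+1) => Fin 4))]
      rw [Fintype.sum_prod_type]
      have hsplit : ∀ (w0 : Fin 4) (W' : Fin k → Fin 4),
          (∏ j : Fin (k+1), (if h : j.1 + d < k+1
              then f ((Fin.consEquiv (fun _ : Fin (k+1) => Fin 4)) (w0, W') j)
                     ((Fin.consEquiv (fun _ : Fin (k+1) => Fin 4)) (w0, W') ⟨j.1 + d, h⟩) else 1))
          = f w0 (W' ⟨d - 1, by omega⟩) *
            ∏ j : Fin k, (if h : j.1 + d < k then f (W' j) (W' ⟨j.1 + d, h⟩) else 1) := by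
        intro w0 W'
        rw [Fin.prod_univ_succ]
        congr 1
        · rw [dif_pos (show (0 : Fin (k+1)).1 + d < k+1 by simp only [Fin.val_zero]; omega)]
          have h0 : (Fin.consEquiv (fun _ : Fin (k+1) => Fin 4)) (w0, W') 0 = w0 := rfl
          have hd' : (⟨(0 : Fin (k+1)).1 + d, by simp only [Fin.val_zero]; omega⟩ : Fin (k+1))
              = Fin.succ ⟨d - 1, by omega⟩ := by
            apply Fin.ext
            show (0 : Fin (k+1)).1 + d = (d - 1) + 1
            simp only [Fin.val_zero]
            omega
          rw [h0]
          congr 1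
          rw [hd']
          rfl
        · apply Finset.prod_congr rfl
          intro j _
          by_cases h : j.1 + d < k
          · rw [dif_pos (show (Fin.succ j).1 + d < k + 1 by simp only [Fin.val_succ]; omega), dif_pos h]
            have h1 : (Fin.consEquiv (fun _ : Fin (k+1) => Fin 4)) (w0, W') (Fin.succ j) = W' j := rfl
            rw [h1]
            congr 1
            have h2 : (⟨(Fin.succ j).1 + d, by simp only [Fin.val_succ]; omega⟩ : Fin (k+1))
                = Fin.succ ⟨j.1 + d, h⟩ := by
              apply Fin.ext
              show (Fin.succ j).1 + d = (j.1 + d) + 1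
              simp only [Fin.val_succ]
              omega
            rw [h2]
            rfl
          · rw [dif_neg (show ¬((Fin.succ j).1 + d < k + 1) by simp only [Fin.val_succ]; omega), dif_neg h]
      simp only [hsplit]
      rw [Finset.sum_comm]
      have : ∀ W' : Fin k → Fin 4,
          (∑ w0 : Fin 4, f w0 (W' ⟨d - 1, by omega⟩) *
            ∏ j : Fin k, (if h : j.1 + d < k then f (W' j) (W' ⟨j.1 + d, h⟩) else 1))
          = 4 * ∏ j : Fin k, (if h : j.1 + d < k then f (W' j) (W' ⟨j.1 + d, h⟩) else 1) := by
        intro W'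
        rw [← Finset.sum_mul, hf]
      simp only [this]
      rw [← Finset.mul_sum, ih]
      ring

lemma prod_window_eq {n k : ℕ} (i : ℕ) (hik : i + k ≤ n)
    (G : Fin n → ℝ) (F : Fin k → ℝ)
    (hin : ∀ p : Fin n, ∀ h : i ≤ p.1 ∧ p.1 < i + k, G p = F ⟨p.1 - i, by omega⟩)
    (hout : ∀ p : Fin n, ¬(i ≤ p.1 ∧ p.1 < i + k) → G p = 1) :
    ∏ p : Fin n, G p = ∏ j : Fin k, F j := by
  classical
  set e : Fin k → Fin n := fun j => ⟨i + j.1, by omega⟩ with he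
  have hinj : Function.Injective e := by
    intro a b hab
    have : i + a.1 = i + b.1 := congrArg Fin.val hab
    ext; omega
  have hmem : ∀ p : Fin n, p ∈ Finset.image e Finset.univ ↔ (i ≤ p.1 ∧ p.1 < i + k) := by
    intro p
    simp only [Finset.mem_image, Finset.mem_univ, true_and]
    constructor
    · rintro ⟨j, rfl⟩
      refine ⟨Nat.le_add_right _ _, ?_⟩
      have := j.2
      exact Nat.add_lt_add_left this i
    · rintro ⟨h1, h2⟩
      refine ⟨⟨p.1 - i, by omega⟩, ?_⟩
      apply Fin.ext
      show i + (p.1 - i) = p.1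
      omega
  have h1 : ∏ p : Fin n, G p = ∏ p ∈ Finset.image e Finset.univ, G p := by
    refine (Finset.prod_subset (Finset.subset_univ _) ?_).symm
    intro p _ hp
    exact hout p (fun h => hp ((hmem p).2 h))
  rw [h1, Finset.prod_image (fun a _ b _ h => hinj h)]
  apply Finset.prod_congr rfl
  intro j _
  have hw : i ≤ (e j).1 ∧ (e j).1 < i + k := by
    refine ⟨Nat.le_add_right _ _, ?_⟩
    have := j.2
    exact Nat.add_lt_add_left this i
  rw [hin (e j) hw]
  congr 1
  apply Fin.ext
  show (e j).1 - i = j.1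
  show i + j.1 - i = j.1
  omega

def wfac (n k i : ℕ) (W : Fin k → Fin 4) (sel : Fin 4 × Fin 4 → Fin 4)
    (p : Fin n) (x : Fin 4 × Fin 4) : ℝ :=
  if h : i ≤ p.1 ∧ p.1 < i + k then (if sel x = W ⟨p.1 - i, by omega⟩ then 1 else 0) else 1

lemma indicator_eq_prod_wfac {n k : ℕ} (i : ℕ) (hik : i + k ≤ n)
    (W : Fin k → Fin 4) (sel : Fin 4 × Fin 4 → Fin 4) (ω : Fin n → Fin 4 × Fin 4) :
    (if ∀ j : Fin k, sel (ω ⟨i + j.1, by have := j.2; omega⟩) = W j then 1 else 0 : ℝ)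
      = ∏ p : Fin n, wfac n k i W sel p (ω p) := by
  have h2 : ∏ p : Fin n, wfac n k i W sel p (ω p)
      = ∏ j : Fin k, (if sel (ω ⟨i + j.1, by have := j.2; omega⟩) = W j then (1:ℝ) else 0) := by
    refine prod_window_eq i hik _ _ ?_ ?_
    · intro p h
      rw [wfac, dif_pos h]
      have harg : (⟨i + (⟨p.1 - i, by omega⟩ : Fin k).1, by have := h.2; omega⟩ : Fin n) = p := by
        apply Fin.ext
        show i + (p.1 - i) = p.1
        omega
      rw [harg]
    · intro p h
      rw [wfac, dif_neg h]
  rw [h2]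
  by_cases hall : ∀ j : Fin k, sel (ω ⟨i + j.1, by have := j.2; omega⟩) = W j
  · rw [if_pos hall]
    exact (Finset.prod_eq_one (fun j _ => if_pos (hall j))).symm
  · rw [if_neg hall]
    obtain ⟨j0, hj0⟩ := not_forall.mp hall
    refine (Finset.prod_eq_zero (Finset.mem_univ j0) ?_).symm
    rw [if_neg hj0]

lemma sum_pair_indicator {n k : ℕ} (ν : Fin 4 × Fin 4 → ℝ)
    (sel₁ sel₂ : Fin 4 × Fin 4 → Fin 4) (W : Fin k → Fin 4)
    (i i' : ℕ) (hi : i + k ≤ n) (hi' : i' + k ≤ n) :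
    (∑ ω : Fin n → Fin 4 × Fin 4, (∏ p, ν (ω p)) *
      ((if ∀ j : Fin k, sel₁ (ω ⟨i + j.1, by have := j.2; omega⟩) = W j then 1 else 0) *
       (if ∀ j : Fin k, sel₂ (ω ⟨i' + j.1, by have := j.2; omega⟩) = W j then 1 else 0)))
    = ∏ p : Fin n, ∑ x : Fin 4 × Fin 4,
        ν x * (wfac n k i W sel₁ p x * wfac n k i' W sel₂ p x) := by
  have key : ∀ ω : Fin n → Fin 4 × Fin 4,
      (∏ p, ν (ω p)) *
      ((if ∀ j : Fin k, sel₁ (ω ⟨i + j.1, by have := j.2; omega⟩) = W j then 1 else 0) *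
       (if ∀ j : Fin k, sel₂ (ω ⟨i' + j.1, by have := j.2; omega⟩) = W j then 1 else 0))
      = ∏ p, (ν (ω p) * (wfac n k i W sel₁ p (ω p) * wfac n k i' W sel₂ p (ω p))) := by
    intro ω
    rw [indicator_eq_prod_wfac i hi W sel₁ ω, indicator_eq_prod_wfac i' hi' W sel₂ ω,
      ← Finset.prod_mul_distrib, ← Finset.prod_mul_distrib]
  have h3 := sum_prod_eval (fun p x => ν x * (wfac n k i W sel₁ p x * wfac n k i' W sel₂ p x))
  rw [← h3]
  exact Finset.sum_congr rfl (fun ω _ => key ω)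

lemma diag_sum {n k : ℕ} (ν : Fin 4 × Fin 4 → ℝ)
    (hν : ∑ x : Fin 4 × Fin 4, ν x = 1)
    (sel₁ sel₂ : Fin 4 × Fin 4 → Fin 4) (q : Fin 4 → ℝ)
    (hq : ∀ w, (∑ x : Fin 4 × Fin 4, ν x *
        ((if sel₁ x = w then (1:ℝ) else 0) * (if sel₂ x = w then 1 else 0))) = q w)
    (i : ℕ) (hi : i + k ≤ n) :
    (∑ W : Fin k → Fin 4, ∑ ω : Fin n → Fin 4 × Fin 4, (∏ p, ν (ω p)) *
      ((if ∀ j : Fin k, sel₁ (ω ⟨i + j.1, by have := j.2; omega⟩) = W j then 1 else 0) *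
       (if ∀ j : Fin k, sel₂ (ω ⟨i + j.1, by have := j.2; omega⟩) = W j then 1 else 0)))
    = (∑ w, q w) ^ k := by
  have hstep : ∀ W : Fin k → Fin 4,
      (∑ ω : Fin n → Fin 4 × Fin 4, (∏ p, ν (ω p)) *
      ((if ∀ j : Fin k, sel₁ (ω ⟨i + j.1, by have := j.2; omega⟩) = W j then 1 else 0) *
       (if ∀ j : Fin k, sel₂ (ω ⟨i + j.1, by have := j.2; omega⟩) = W j then 1 else 0)))
      = ∏ j : Fin k, q (W j) := by
    intro W
    rw [sum_pair_indicator ν sel₁ sel₂ W i i hi hi]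
    refine prod_window_eq i hi _ _ ?_ ?_
    · intro p h
      have e1 : ∀ x, wfac n k i W sel₁ p x = (if sel₁ x = W ⟨p.1 - i, by omega⟩ then (1:ℝ) else 0) := by
        intro x; rw [wfac, dif_pos h]
      have e2 : ∀ x, wfac n k i W sel₂ p x = (if sel₂ x = W ⟨p.1 - i, by omega⟩ then (1:ℝ) else 0) := by
        intro x; rw [wfac, dif_pos h]
      simp only [e1, e2]
      exact hq _
    · intro p h
      have e1 : ∀ x, wfac n k i W sel₁ p x = 1 := by intro x; rw [wfac, dif_neg h]
      have e2 : ∀ x, wfac n k i W sel₂ p x = 1 := by intro x; rw [wfac, dif_neg h]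
      simp only [e1, e2, mul_one]
      exact hν
  simp only [hstep]
  have := sum_prod_eval (n := k) (fun _ w => q w)
  rw [this, Finset.prod_const, Finset.card_univ, Fintype.card_fin]

lemma offdiag_sum {n k : ℕ} (ν : Fin 4 × Fin 4 → ℝ)
    (hν : ∑ x : Fin 4 × Fin 4, ν x = 1)
    (sel₁ sel₂ : Fin 4 × Fin 4 → Fin 4) (f : Fin 4 → Fin 4 → ℝ)
    (hf : ∀ b, ∑ a, f a b = 4)
    (h1 : ∀ w, (∑ x : Fin 4 × Fin 4, ν x * (if sel₁ x = w then (1:ℝ) else 0)) = 1/4)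
    (h2 : ∀ w, (∑ x : Fin 4 × Fin 4, ν x * (if sel₂ x = w then (1:ℝ) else 0)) = 1/4)
    (h12 : ∀ a b, (∑ x : Fin 4 × Fin 4, ν x *
        ((if sel₁ x = a then (1:ℝ) else 0) * (if sel₂ x = b then 1 else 0))) = (1/16) * f b a)
    (i i' : ℕ) (hii : i < i') (hi : i + k ≤ n) (hi' : i' + k ≤ n) :
    (∑ W : Fin k → Fin 4, ∑ ω : Fin n → Fin 4 × Fin 4, (∏ p, ν (ω p)) *
      ((if ∀ j : Fin k, sel₁ (ω ⟨i + j.1, by have := j.2; omega⟩) = W j then 1 else 0) *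
       (if ∀ j : Fin k, sel₂ (ω ⟨i' + j.1, by have := j.2; omega⟩) = W j then 1 else 0)))
    = (1/4) ^ k := by
  set d := i' - i with hd
  have hd1 : 1 ≤ d := by omega
  have hstep : ∀ W : Fin k → Fin 4,
      (∑ ω : Fin n → Fin 4 × Fin 4, (∏ p, ν (ω p)) *
      ((if ∀ j : Fin k, sel₁ (ω ⟨i + j.1, by have := j.2; omega⟩) = W j then 1 else 0) *
       (if ∀ j : Fin k, sel₂ (ω ⟨i' + j.1, by have := j.2; omega⟩) = W j then 1 else 0)))
      = (1/4 : ℝ)^k * ((1/4 : ℝ)^k *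
          ∏ j : Fin k, (if h : j.1 + d < k then f (W j) (W ⟨j.1 + d, h⟩) else 1)) := by
    intro W
    rw [sum_pair_indicator ν sel₁ sel₂ W i i' hi hi']
    have hsp : ∀ p : Fin n,
        (∑ x : Fin 4 × Fin 4, ν x * (wfac n k i W sel₁ p x * wfac n k i' W sel₂ p x))
        = (if i ≤ p.1 ∧ p.1 < i + k then (1/4 : ℝ) else 1) *
          ((if i' ≤ p.1 ∧ p.1 < i' + k then (1/4 : ℝ) else 1) *
           (if h : i' ≤ p.1 ∧ p.1 < i + k
              then f (W ⟨p.1 - i', by omega⟩) (W ⟨p.1 - i, by omega⟩) else 1)) := by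
      intro p
      by_cases h1p : i ≤ p.1 ∧ p.1 < i + k
      · by_cases h2p : i' ≤ p.1 ∧ p.1 < i' + k
        · -- overlap
          have hov : i' ≤ p.1 ∧ p.1 < i + k := ⟨h2p.1, h1p.2⟩
          rw [if_pos h1p, if_pos h2p, dif_pos hov]
          have e1 : ∀ x, wfac n k i W sel₁ p x
              = (if sel₁ x = W ⟨p.1 - i, by omega⟩ then (1:ℝ) else 0) := by
            intro x; rw [wfac, dif_pos h1p]
          have e2 : ∀ x, wfac n k i' W sel₂ p x
              = (if sel₂ x = W ⟨p.1 - i', by omega⟩ then (1:ℝ) else 0) := by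
            intro x; rw [wfac, dif_pos h2p]
          simp only [e1, e2]
          rw [h12]
          ring
        · -- window 1 only
          have hov : ¬(i' ≤ p.1 ∧ p.1 < i + k) := by omega
          rw [if_pos h1p, if_neg h2p, dif_neg hov]
          have e1 : ∀ x, wfac n k i W sel₁ p x
              = (if sel₁ x = W ⟨p.1 - i, by omega⟩ then (1:ℝ) else 0) := by
            intro x; rw [wfac, dif_pos h1p]
          have e2 : ∀ x, wfac n k i' W sel₂ p x = 1 := by
            intro x; rw [wfac, dif_neg h2p]
          simp only [e1, e2, mul_one]
          rw [h1]
          try ring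
      · by_cases h2p : i' ≤ p.1 ∧ p.1 < i' + k
        · -- window 2 only
          have hov : ¬(i' ≤ p.1 ∧ p.1 < i + k) := by omega
          rw [if_neg h1p, if_pos h2p, dif_neg hov]
          have e1 : ∀ x, wfac n k i W sel₁ p x = 1 := by
            intro x; rw [wfac, dif_neg h1p]
          have e2 : ∀ x, wfac n k i' W sel₂ p x
              = (if sel₂ x = W ⟨p.1 - i', by omega⟩ then (1:ℝ) else 0) := by
            intro x; rw [wfac, dif_pos h2p]
          simp only [e1, e2, one_mul]
          rw [h2]
          try ring
        · -- neither
          have hov : ¬(i' ≤ p.1 ∧ p.1 < i + k) := by omega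
          rw [if_neg h1p, if_neg h2p, dif_neg hov]
          have e1 : ∀ x, wfac n k i W sel₁ p x = 1 := by
            intro x; rw [wfac, dif_neg h1p]
          have e2 : ∀ x, wfac n k i' W sel₂ p x = 1 := by
            intro x; rw [wfac, dif_neg h2p]
          simp only [e1, e2, mul_one]
          rw [hν]
          try ring
    simp only [hsp]
    rw [Finset.prod_mul_distrib, Finset.prod_mul_distrib]
    congr 1
    · rw [prod_window_eq i hi _ (fun _ : Fin k => (1/4 : ℝ))
        (fun p h => if_pos h) (fun p h => if_neg h)]
      rw [Finset.prod_const, Finset.card_univ, Fintype.card_fin]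
    congr 1
    · rw [prod_window_eq i' hi' _ (fun _ : Fin k => (1/4 : ℝ))
        (fun p h => if_pos h) (fun p h => if_neg h)]
      rw [Finset.prod_const, Finset.card_univ, Fintype.card_fin]
    · refine prod_window_eq i' hi' _
        (fun j : Fin k => if h : j.1 + d < k then f (W j) (W ⟨j.1 + d, h⟩) else 1) ?_ ?_
      · intro p h
        dsimp only
        by_cases hov : i' ≤ p.1 ∧ p.1 < i + k
        · rw [dif_pos hov, dif_pos (show (⟨p.1 - i', by omega⟩ : Fin k).1 + d < k by
            show p.1 - i' + d < k; omega)]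
          have harg : (⟨p.1 - i, by omega⟩ : Fin k)
              = ⟨(⟨p.1 - i', by omega⟩ : Fin k).1 + d, by show p.1 - i' + d < k; omega⟩ := by
            apply Fin.ext
            show p.1 - i = p.1 - i' + d
            omega
          rw [harg]
        · rw [dif_neg hov, dif_neg (show ¬((⟨p.1 - i', by omega⟩ : Fin k).1 + d < k) by
            show ¬(p.1 - i' + d < k); omega)]
      · intro p h
        rw [dif_neg (by omega)]
  simp only [hstep]
  rw [← Finset.mul_sum, ← Finset.mul_sum, chain_sum d hd1 f hf k]
  rw [show (4:ℝ)^k = 4^k from rfl]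
  rw [← mul_assoc, ← mul_pow, ← mul_pow]
  norm_num

lemma Mexp_row (E1 E2 E3 : ℝ) (a : Fin 4) :
    ∑ b, ((1/4 : ℝ) • (Hmat * Matrix.diagonal ![(1:ℝ),E1,E2,E3] * Hmat)) a b = 1 := by
  fin_cases a <;>
    · simp only [Matrix.smul_apply, Matrix.mul_apply, Fin.sum_univ_four, Matrix.diagonal_apply]
      simp [Hmat]
      try ring

lemma Mexp_col (E1 E2 E3 : ℝ) (b : Fin 4) :
    ∑ a, ((1/4 : ℝ) • (Hmat * Matrix.diagonal ![(1:ℝ),E1,E2,E3] * Hmat)) a b = 1 := by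
  fin_cases b <;>
    · simp only [Matrix.smul_apply, Matrix.mul_apply, Fin.sum_univ_four, Matrix.diagonal_apply]
      simp [Hmat]
      try ring

lemma Mexp_tr (E1 E2 E3 : ℝ) :
    ∑ a, ((1/4 : ℝ) • (Hmat * Matrix.diagonal ![(1:ℝ),E1,E2,E3] * Hmat)) a a
      = 1 + E3 + E2 + E1 := by
  simp only [Matrix.smul_apply, Matrix.mul_apply, Fin.sum_univ_four, Matrix.diagonal_apply]
  simp [Hmat]
  try ring


lemma sum_pair_ite_fst (g : Fin 4 → Fin 4 → ℝ) (w : Fin 4) :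
    (∑ x : Fin 4 × Fin 4, g x.1 x.2 * (if x.1 = w then (1:ℝ) else 0)) = ∑ b, g w b := by
  rw [Fintype.sum_prod_type]
  simp [mul_ite, mul_one, mul_zero, Finset.sum_ite_eq']

lemma sum_pair_ite_snd (g : Fin 4 → Fin 4 → ℝ) (w : Fin 4) :
    (∑ x : Fin 4 × Fin 4, g x.1 x.2 * (if x.2 = w then (1:ℝ) else 0)) = ∑ a, g a w := by
  rw [Fintype.sum_prod_type]
  simp [mul_ite, mul_one, mul_zero, Finset.sum_ite_eq']

lemma sum_pair_ite_fst_snd (g : Fin 4 → Fin 4 → ℝ) (a b : Fin 4) :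
    (∑ x : Fin 4 × Fin 4, g x.1 x.2 *
      ((if x.1 = a then (1:ℝ) else 0) * (if x.2 = b then 1 else 0))) = g a b := by
  rw [Fintype.sum_prod_type]
  simp [mul_ite, mul_one, mul_zero, ite_mul, zero_mul, one_mul, Finset.sum_ite_eq']

lemma sum_pair_ite_snd_fst (g : Fin 4 → Fin 4 → ℝ) (a b : Fin 4) :
    (∑ x : Fin 4 × Fin 4, g x.1 x.2 *
      ((if x.2 = a then (1:ℝ) else 0) * (if x.1 = b then 1 else 0))) = g b a := by
  rw [Fintype.sum_prod_type]
  simp [mul_ite, mul_one, mul_zero, ite_mul, zero_mul, one_mul, Finset.sum_ite_eq']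

lemma sum_pair_ite_fst_fst (g : Fin 4 → Fin 4 → ℝ) (a b : Fin 4) :
    (∑ x : Fin 4 × Fin 4, g x.1 x.2 *
      ((if x.1 = a then (1:ℝ) else 0) * (if x.1 = b then 1 else 0)))
    = if a = b then ∑ b', g a b' else 0 := by
  rw [Fintype.sum_prod_type]
  by_cases hab : a = b
  · subst hab
    simp [mul_ite, mul_one, mul_zero, ite_mul, zero_mul, one_mul, Finset.sum_ite_eq']
  · rw [if_neg hab]
    have : ∀ a' : Fin 4, ∀ b' : Fin 4, g a' b' *
        ((if a' = a then (1:ℝ) else 0) * (if a' = b then 1 else 0)) = 0 := by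
      intro a' b'
      by_cases h1 : a' = a
      · rw [if_pos h1, if_neg (by rw [h1]; exact hab)]; ring
      · rw [if_neg h1]; ring
    simp only [this, Finset.sum_const_zero]

lemma sum_pair_ite_snd_snd (g : Fin 4 → Fin 4 → ℝ) (a b : Fin 4) :
    (∑ x : Fin 4 × Fin 4, g x.1 x.2 *
      ((if x.2 = a then (1:ℝ) else 0) * (if x.2 = b then 1 else 0)))
    = if a = b then ∑ a', g a' a else 0 := by
  rw [Fintype.sum_prod_type]
  by_cases hab : a = b
  · subst hab
    simp [mul_ite, mul_one, mul_zero, ite_mul, zero_mul, one_mul, Finset.sum_ite_eq']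
  · rw [if_neg hab]
    have : ∀ a' : Fin 4, ∀ b' : Fin 4, g a' b' *
        ((if b' = a then (1:ℝ) else 0) * (if b' = b then 1 else 0)) = 0 := by
      intro a' b'
      by_cases h1 : b' = a
      · rw [if_pos h1, if_neg (by rw [h1]; exact hab)]; ring
      · rw [if_neg h1]; ring
    simp only [this, Finset.sum_const_zero]

/-!
Kimura 3-parameter k-mer formula.  `Q` is the K3P rate matrix with parameters
`α, β, γ > 0`, `M = exp(tQ)`, stationary distribution uniform (1/4).  Sequences
of length `n` have i.i.d. site pairs with joint distribution `(1/4) * M(w,u)`.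
The expected squared Euclidean distance between k-mer count vectors equals
`2(n−k+1) (1 − ((1 + e^{−2(α+β)t} + e^{−2(α+γ)t} + e^{−2(β+γ)t})/4)^k)`.
-/
theorem kimura3_kmer_expected_squared_distance
    (k n : ℕ) (hk : 1 ≤ k) (hkn : k ≤ n)
    (α β γ : ℝ) (hα : 0 < α) (hβ : 0 < β) (hγ : 0 < γ)
    (t : ℝ) (ht : 0 ≤ t)
    (Q : Matrix (Fin 4) (Fin 4) ℝ)
    (hQ : Q = !![-(α + β + γ), α, β, γ;
                 α, -(α + β + γ), γ, β;
                 β, γ, -(α + β + γ), α;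
                 γ, β, α, -(α + β + γ)])
    (M : Matrix (Fin 4) (Fin 4) ℝ)
    (hM : M = NormedSpace.exp (t • Q))
    (prob : (Fin n → Fin 4 × Fin 4) → ℝ)
    (hprob : ∀ ω, prob ω = ∏ i, (1 / 4 : ℝ) * M (ω i).1 (ω i).2)
    (E : ((Fin n → Fin 4 × Fin 4) → ℝ) → ℝ)
    (hE : ∀ f, E f = ∑ ω, prob ω * f ω)
    (X₁ X₂ : (Fin k → Fin 4) → (Fin n → Fin 4 × Fin 4) → ℝ)
    (hX₁ : ∀ W ω, X₁ W ω = ∑ i : Fin (n - k + 1),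
      if ∀ j : Fin k, (ω ⟨i.1 + j.1, by have := i.2; have := j.2; omega⟩).1 = W j
        then 1 else 0)
    (hX₂ : ∀ W ω, X₂ W ω = ∑ i : Fin (n - k + 1),
      if ∀ j : Fin k, (ω ⟨i.1 + j.1, by have := i.2; have := j.2; omega⟩).2 = W j
        then 1 else 0) :
    E (fun ω => ∑ W : Fin k → Fin 4, (X₁ W ω - X₂ W ω) ^ 2)
      = 2 * ((n - k + 1 : ℕ) : ℝ) *
        (1 - ((1 + Real.exp (-2 * (α + β) * t) + Real.exp (-2 * (α + γ) * t)
                + Real.exp (-2 * (β + γ) * t)) / 4) ^ k) := by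
  -- Explicit form of the transition matrix
  have hMex : M = (1/4 : ℝ) • (Hmat * Matrix.diagonal
      ![(1:ℝ), Real.exp (-2*(β+γ)*t), Real.exp (-2*(α+γ)*t), Real.exp (-2*(α+β)*t)] * Hmat) := by
    rw [hM, hQ]
    exact k3p_exp α β γ t
  have hrow : ∀ a, ∑ b, M a b = 1 := by
    intro a; rw [hMex]; exact Mexp_row _ _ _ a
  have hcol : ∀ b, ∑ a, M a b = 1 := by
    intro b; rw [hMex]; exact Mexp_col _ _ _ b
  have htr : (∑ a, M a a)
      = 1 + Real.exp (-2*(α+β)*t) + Real.exp (-2*(α+γ)*t) + Real.exp (-2*(β+γ)*t) := by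
    rw [hMex]; exact Mexp_tr _ _ _
  set P : ℝ := (1 + Real.exp (-2 * (α + β) * t) + Real.exp (-2 * (α + γ) * t)
                + Real.exp (-2 * (β + γ) * t)) / 4 with hP
  -- single site distribution facts
  have hν : (∑ x : Fin 4 × Fin 4, (1/4 : ℝ) * M x.1 x.2) = 1 := by
    rw [Fintype.sum_prod_type]
    have h4 : ∀ a : Fin 4, (∑ b, (1/4 : ℝ) * M a b) = 1/4 := by
      intro a; rw [← Finset.mul_sum, hrow a, mul_one]
    rw [Fin.sum_univ_four, h4, h4, h4, h4]
    norm_num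
  have h1fst : ∀ w, (∑ x : Fin 4 × Fin 4,
      (1/4 : ℝ) * M x.1 x.2 * (if Prod.fst x = w then (1:ℝ) else 0)) = 1/4 := by
    intro w
    exact (sum_pair_ite_fst (fun a b => (1/4:ℝ) * M a b) w).trans
      (by rw [← Finset.mul_sum, hrow w, mul_one])
  have h1snd : ∀ w, (∑ x : Fin 4 × Fin 4,
      (1/4 : ℝ) * M x.1 x.2 * (if Prod.snd x = w then (1:ℝ) else 0)) = 1/4 := by
    intro w
    exact (sum_pair_ite_snd (fun a b => (1/4:ℝ) * M a b) w).trans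
      (by rw [← Finset.mul_sum, hcol w, mul_one])
  have hf11 : ∀ b : Fin 4, (∑ a, (if a = b then (4:ℝ) else 0)) = 4 := by
    intro b; simp [Finset.sum_ite_eq']
  have hf12 : ∀ b : Fin 4, (∑ a, (4:ℝ) * M b a) = 4 := by
    intro b; rw [← Finset.mul_sum, hrow b, mul_one]
  have hf21 : ∀ b : Fin 4, (∑ a, (4:ℝ) * M a b) = 4 := by
    intro b; rw [← Finset.mul_sum, hcol b, mul_one]
  have h12_11 : ∀ a b : Fin 4, (∑ x : Fin 4 × Fin 4, (1/4 : ℝ) * M x.1 x.2 *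
      ((if Prod.fst x = a then (1:ℝ) else 0) * (if Prod.fst x = b then 1 else 0)))
      = 1/16 * (if b = a then (4:ℝ) else 0) := by
    intro a b
    refine (sum_pair_ite_fst_fst (fun a b => (1/4:ℝ) * M a b) a b).trans ?_
    by_cases hab : a = b
    · rw [if_pos hab, if_pos hab.symm, ← Finset.mul_sum, hrow a]
      norm_num
    · rw [if_neg hab, if_neg (fun h => hab h.symm)]
      norm_num
  have h12_22 : ∀ a b : Fin 4, (∑ x : Fin 4 × Fin 4, (1/4 : ℝ) * M x.1 x.2 *
      ((if Prod.snd x = a then (1:ℝ) else 0) * (if Prod.snd x = b then 1 else 0)))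
      = 1/16 * (if b = a then (4:ℝ) else 0) := by
    intro a b
    refine (sum_pair_ite_snd_snd (fun a b => (1/4:ℝ) * M a b) a b).trans ?_
    by_cases hab : a = b
    · rw [if_pos hab, if_pos hab.symm, ← Finset.mul_sum, hcol a]
      norm_num
    · rw [if_neg hab, if_neg (fun h => hab h.symm)]
      norm_num
  have h12_12 : ∀ a b : Fin 4, (∑ x : Fin 4 × Fin 4, (1/4 : ℝ) * M x.1 x.2 *
      ((if Prod.fst x = a then (1:ℝ) else 0) * (if Prod.snd x = b then 1 else 0)))
      = 1/16 * ((4:ℝ) * M a b) := by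
    intro a b
    refine (sum_pair_ite_fst_snd (fun a b => (1/4:ℝ) * M a b) a b).trans (by ring)
  have h12_21 : ∀ a b : Fin 4, (∑ x : Fin 4 × Fin 4, (1/4 : ℝ) * M x.1 x.2 *
      ((if Prod.snd x = a then (1:ℝ) else 0) * (if Prod.fst x = b then 1 else 0)))
      = 1/16 * ((4:ℝ) * M b a) := by
    intro a b
    refine (sum_pair_ite_snd_fst (fun a b => (1/4:ℝ) * M a b) a b).trans (by ring)
  -- diagonal per-site values
  have hq11 : ∀ w : Fin 4, (∑ x : Fin 4 × Fin 4, (1/4 : ℝ) * M x.1 x.2 *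
      ((if Prod.fst x = w then (1:ℝ) else 0) * (if Prod.fst x = w then 1 else 0)))
      = 1/4 := by
    intro w
    refine (sum_pair_ite_fst_fst (fun a b => (1/4:ℝ) * M a b) w w).trans ?_
    rw [if_pos rfl, ← Finset.mul_sum, hrow w, mul_one]
  have hq22 : ∀ w : Fin 4, (∑ x : Fin 4 × Fin 4, (1/4 : ℝ) * M x.1 x.2 *
      ((if Prod.snd x = w then (1:ℝ) else 0) * (if Prod.snd x = w then 1 else 0)))
      = 1/4 := by
    intro w
    refine (sum_pair_ite_snd_snd (fun a b => (1/4:ℝ) * M a b) w w).trans ?_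
    rw [if_pos rfl, ← Finset.mul_sum, hcol w, mul_one]
  have hq12 : ∀ w : Fin 4, (∑ x : Fin 4 × Fin 4, (1/4 : ℝ) * M x.1 x.2 *
      ((if Prod.fst x = w then (1:ℝ) else 0) * (if Prod.snd x = w then 1 else 0)))
      = 1/4 * M w w :=
    fun w => sum_pair_ite_fst_snd (fun a b => (1/4:ℝ) * M a b) w w
  have hq21 : ∀ w : Fin 4, (∑ x : Fin 4 × Fin 4, (1/4 : ℝ) * M x.1 x.2 *
      ((if Prod.snd x = w then (1:ℝ) else 0) * (if Prod.fst x = w then 1 else 0)))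
      = 1/4 * M w w := by
    intro w
    refine (sum_pair_ite_snd_fst (fun a b => (1/4:ℝ) * M a b) w w).trans rfl
  have hsumq : (∑ w, (1/4 : ℝ) * M w w) = P := by
    rw [← Finset.mul_sum, htr, hP]; ring
  -- the four off-diagonal sums
  have hOff11 : ∀ (i i' : ℕ) (hlt : i < i') (hik : i + k ≤ n) (hik' : i' + k ≤ n),
      (∑ W : Fin k → Fin 4, ∑ ω : Fin n → Fin 4 × Fin 4,
        (∏ p, (1/4:ℝ) * M (ω p).1 (ω p).2) *
        ((if ∀ j : Fin k, (ω ⟨i + j.1, by have := j.2; omega⟩).1 = W j then (1:ℝ) else 0) *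
         (if ∀ j : Fin k, (ω ⟨i' + j.1, by have := j.2; omega⟩).1 = W j then 1 else 0)))
      = (1/4)^k := by
    intro i i' hlt hik hik'
    exact offdiag_sum (fun x => (1/4:ℝ) * M x.1 x.2) hν Prod.fst Prod.fst
      (fun u v => if u = v then 4 else 0) hf11 h1fst h1fst h12_11 i i' hlt hik hik'
  have hOff22 : ∀ (i i' : ℕ) (hlt : i < i') (hik : i + k ≤ n) (hik' : i' + k ≤ n),
      (∑ W : Fin k → Fin 4, ∑ ω : Fin n → Fin 4 × Fin 4,
        (∏ p, (1/4:ℝ) * M (ω p).1 (ω p).2) *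
        ((if ∀ j : Fin k, (ω ⟨i + j.1, by have := j.2; omega⟩).2 = W j then (1:ℝ) else 0) *
         (if ∀ j : Fin k, (ω ⟨i' + j.1, by have := j.2; omega⟩).2 = W j then 1 else 0)))
      = (1/4)^k := by
    intro i i' hlt hik hik'
    exact offdiag_sum (fun x => (1/4:ℝ) * M x.1 x.2) hν Prod.snd Prod.snd
      (fun u v => if u = v then 4 else 0) hf11 h1snd h1snd h12_22 i i' hlt hik hik'
  have hOff12 : ∀ (i i' : ℕ) (hlt : i < i') (hik : i + k ≤ n) (hik' : i' + k ≤ n),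
      (∑ W : Fin k → Fin 4, ∑ ω : Fin n → Fin 4 × Fin 4,
        (∏ p, (1/4:ℝ) * M (ω p).1 (ω p).2) *
        ((if ∀ j : Fin k, (ω ⟨i + j.1, by have := j.2; omega⟩).1 = W j then (1:ℝ) else 0) *
         (if ∀ j : Fin k, (ω ⟨i' + j.1, by have := j.2; omega⟩).2 = W j then 1 else 0)))
      = (1/4)^k := by
    intro i i' hlt hik hik'
    exact offdiag_sum (fun x => (1/4:ℝ) * M x.1 x.2) hν Prod.fst Prod.snd
      (fun u v => (4:ℝ) * M v u) (fun b => hf12 b) h1fst h1snd h12_12 i i' hlt hik hik'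
  have hOff21 : ∀ (i i' : ℕ) (hlt : i < i') (hik : i + k ≤ n) (hik' : i' + k ≤ n),
      (∑ W : Fin k → Fin 4, ∑ ω : Fin n → Fin 4 × Fin 4,
        (∏ p, (1/4:ℝ) * M (ω p).1 (ω p).2) *
        ((if ∀ j : Fin k, (ω ⟨i + j.1, by have := j.2; omega⟩).2 = W j then (1:ℝ) else 0) *
         (if ∀ j : Fin k, (ω ⟨i' + j.1, by have := j.2; omega⟩).1 = W j then 1 else 0)))
      = (1/4)^k := by
    intro i i' hlt hik hik'
    exact offdiag_sum (fun x => (1/4:ℝ) * M x.1 x.2) hν Prod.snd Prod.fst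
      (fun u v => (4:ℝ) * M u v) (fun b => hf21 b) h1snd h1fst h12_21 i i' hlt hik hik'
  -- the four diagonal sums
  have hD11 : ∀ (i : ℕ) (hik : i + k ≤ n),
      (∑ W : Fin k → Fin 4, ∑ ω : Fin n → Fin 4 × Fin 4,
        (∏ p, (1/4:ℝ) * M (ω p).1 (ω p).2) *
        ((if ∀ j : Fin k, (ω ⟨i + j.1, by have := j.2; omega⟩).1 = W j then (1:ℝ) else 0) *
         (if ∀ j : Fin k, (ω ⟨i + j.1, by have := j.2; omega⟩).1 = W j then 1 else 0)))
      = 1 := by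
    intro i hik
    refine (diag_sum (fun x => (1/4:ℝ) * M x.1 x.2) hν Prod.fst Prod.fst
      (fun _ => (1/4:ℝ)) hq11 i hik).trans ?_
    norm_num
  have hD22 : ∀ (i : ℕ) (hik : i + k ≤ n),
      (∑ W : Fin k → Fin 4, ∑ ω : Fin n → Fin 4 × Fin 4,
        (∏ p, (1/4:ℝ) * M (ω p).1 (ω p).2) *
        ((if ∀ j : Fin k, (ω ⟨i + j.1, by have := j.2; omega⟩).2 = W j then (1:ℝ) else 0) *
         (if ∀ j : Fin k, (ω ⟨i + j.1, by have := j.2; omega⟩).2 = W j then 1 else 0)))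
      = 1 := by
    intro i hik
    refine (diag_sum (fun x => (1/4:ℝ) * M x.1 x.2) hν Prod.snd Prod.snd
      (fun _ => (1/4:ℝ)) hq22 i hik).trans ?_
    norm_num
  have hD12 : ∀ (i : ℕ) (hik : i + k ≤ n),
      (∑ W : Fin k → Fin 4, ∑ ω : Fin n → Fin 4 × Fin 4,
        (∏ p, (1/4:ℝ) * M (ω p).1 (ω p).2) *
        ((if ∀ j : Fin k, (ω ⟨i + j.1, by have := j.2; omega⟩).1 = W j then (1:ℝ) else 0) *
         (if ∀ j : Fin k, (ω ⟨i + j.1, by have := j.2; omega⟩).2 = W j then 1 else 0)))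
      = P ^ k := by
    intro i hik
    refine (diag_sum (fun x => (1/4:ℝ) * M x.1 x.2) hν Prod.fst Prod.snd
      (fun w => (1/4:ℝ) * M w w) hq12 i hik).trans ?_
    rw [hsumq]
  have hD21 : ∀ (i : ℕ) (hik : i + k ≤ n),
      (∑ W : Fin k → Fin 4, ∑ ω : Fin n → Fin 4 × Fin 4,
        (∏ p, (1/4:ℝ) * M (ω p).1 (ω p).2) *
        ((if ∀ j : Fin k, (ω ⟨i + j.1, by have := j.2; omega⟩).2 = W j then (1:ℝ) else 0) *
         (if ∀ j : Fin k, (ω ⟨i + j.1, by have := j.2; omega⟩).1 = W j then 1 else 0)))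
      = P ^ k := by
    intro i hik
    refine (diag_sum (fun x => (1/4:ℝ) * M x.1 x.2) hν Prod.snd Prod.fst
      (fun w => (1/4:ℝ) * M w w) hq21 i hik).trans ?_
    rw [hsumq]
  -- main computation
  rw [hE]
  have hsummand : ∀ ω : Fin n → Fin 4 × Fin 4,
      prob ω * (∑ W : Fin k → Fin 4, (X₁ W ω - X₂ W ω)^2)
      = ∑ i : Fin (n - k + 1), ∑ i' : Fin (n - k + 1), ∑ W : Fin k → Fin 4,
          (∏ p, (1/4 : ℝ) * M (ω p).1 (ω p).2) *
          (((if ∀ j : Fin k, (ω ⟨i.1 + j.1, by have := i.2; have := j.2; omega⟩).1 = W j then (1:ℝ) else 0)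
            - (if ∀ j : Fin k, (ω ⟨i.1 + j.1, by have := i.2; have := j.2; omega⟩).2 = W j then 1 else 0)) *
           ((if ∀ j : Fin k, (ω ⟨i'.1 + j.1, by have := i'.2; have := j.2; omega⟩).1 = W j then 1 else 0)
            - (if ∀ j : Fin k, (ω ⟨i'.1 + j.1, by have := i'.2; have := j.2; omega⟩).2 = W j then 1 else 0))) := by
    intro ω
    rw [hprob ω, Finset.mul_sum]
    have hW : ∀ W : Fin k → Fin 4,
        (∏ p, (1/4 : ℝ) * M (ω p).1 (ω p).2) * (X₁ W ω - X₂ W ω)^2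
        = ∑ i : Fin (n - k + 1), ∑ i' : Fin (n - k + 1),
          (∏ p, (1/4 : ℝ) * M (ω p).1 (ω p).2) *
          (((if ∀ j : Fin k, (ω ⟨i.1 + j.1, by have := i.2; have := j.2; omega⟩).1 = W j then (1:ℝ) else 0)
            - (if ∀ j : Fin k, (ω ⟨i.1 + j.1, by have := i.2; have := j.2; omega⟩).2 = W j then 1 else 0)) *
           ((if ∀ j : Fin k, (ω ⟨i'.1 + j.1, by have := i'.2; have := j.2; omega⟩).1 = W j then 1 else 0)
            - (if ∀ j : Fin k, (ω ⟨i'.1 + j.1, by have := i'.2; have := j.2; omega⟩).2 = W j then 1 else 0))) := by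
      intro W
      rw [hX₁, hX₂, ← Finset.sum_sub_distrib, pow_two, Finset.sum_mul_sum, Finset.mul_sum]
      exact Finset.sum_congr rfl fun i _ => Finset.mul_sum _ _ _
    refine Eq.trans (Finset.sum_congr rfl fun W _ => hW W) ?_
    refine Eq.trans Finset.sum_comm ?_
    exact Finset.sum_congr rfl fun i _ => Finset.sum_comm
  refine Eq.trans (Finset.sum_congr rfl fun ω _ => hsummand ω) ?_
  refine Eq.trans Finset.sum_comm ?_
  refine Eq.trans (Finset.sum_congr rfl fun i _ => Finset.sum_comm) ?_
  refine Eq.trans (Finset.sum_congr rfl fun i _ =>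
    Finset.sum_congr rfl fun i' _ => Finset.sum_comm) ?_
  -- now : ∑ i, ∑ i', ∑ W, ∑ ω, ...
  have hval : ∀ i i' : Fin (n - k + 1),
      (∑ W : Fin k → Fin 4, ∑ ω : Fin n → Fin 4 × Fin 4,
        (∏ p, (1/4 : ℝ) * M (ω p).1 (ω p).2) *
          (((if ∀ j : Fin k, (ω ⟨i.1 + j.1, by have := i.2; have := j.2; omega⟩).1 = W j then (1:ℝ) else 0)
            - (if ∀ j : Fin k, (ω ⟨i.1 + j.1, by have := i.2; have := j.2; omega⟩).2 = W j then 1 else 0)) *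
           ((if ∀ j : Fin k, (ω ⟨i'.1 + j.1, by have := i'.2; have := j.2; omega⟩).1 = W j then 1 else 0)
            - (if ∀ j : Fin k, (ω ⟨i'.1 + j.1, by have := i'.2; have := j.2; omega⟩).2 = W j then 1 else 0))))
      = if i = i' then 2 - 2 * P ^ k else 0 := by
    intro i i'
    have hik : i.1 + k ≤ n := by have := i.2; omega
    have hik' : i'.1 + k ≤ n := by have := i'.2; omega
    have hpt : ∀ (pp a b c d : ℝ), pp * ((a - b) * (c - d))
        = pp * (a * c) - pp * (a * d) - (pp * (b * c) - pp * (b * d)) := by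
      intros; ring
    refine Eq.trans (Finset.sum_congr rfl fun W _ => Finset.sum_congr rfl fun ω _ =>
      hpt _ _ _ _ _) ?_
    simp only [Finset.sum_sub_distrib]
    by_cases hii : i = i'
    · subst hii
      rw [if_pos rfl, hD11 i.1 hik, hD12 i.1 hik, hD21 i.1 hik, hD22 i.1 hik]
      ring
    · rw [if_neg hii]
      have hne : i.1 ≠ i'.1 := fun h => hii (Fin.ext h)
      rcases Nat.lt_or_ge i.1 i'.1 with hlt | hge
      · rw [hOff11 i.1 i'.1 hlt hik hik', hOff12 i.1 i'.1 hlt hik hik',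
          hOff21 i.1 i'.1 hlt hik hik', hOff22 i.1 i'.1 hlt hik hik']
        ring
      · have hlt : i'.1 < i.1 := by omega
        have hc : ∀ (s1 s2 : Fin 4 × Fin 4 → Fin 4),
            (∑ W : Fin k → Fin 4, ∑ ω : Fin n → Fin 4 × Fin 4,
              (∏ p, (1/4 : ℝ) * M (ω p).1 (ω p).2) *
              ((if ∀ j : Fin k, s1 (ω ⟨i.1 + j.1, by have := i.2; have := j.2; omega⟩) = W j then (1:ℝ) else 0) *
               (if ∀ j : Fin k, s2 (ω ⟨i'.1 + j.1, by have := i'.2; have := j.2; omega⟩) = W j then 1 else 0)))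
            = (∑ W : Fin k → Fin 4, ∑ ω : Fin n → Fin 4 × Fin 4,
              (∏ p, (1/4 : ℝ) * M (ω p).1 (ω p).2) *
              ((if ∀ j : Fin k, s2 (ω ⟨i'.1 + j.1, by have := i'.2; have := j.2; omega⟩) = W j then (1:ℝ) else 0) *
               (if ∀ j : Fin k, s1 (ω ⟨i.1 + j.1, by have := i.2; have := j.2; omega⟩) = W j then 1 else 0))) := by
          intro s1 s2
          exact Finset.sum_congr rfl fun W _ => Finset.sum_congr rfl fun ω _ => by ring
        rw [hc Prod.fst Prod.fst, hc Prod.fst Prod.snd, hc Prod.snd Prod.fst, hc Prod.snd Prod.snd]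
        rw [hOff11 i'.1 i.1 hlt hik' hik, hOff12 i'.1 i.1 hlt hik' hik,
          hOff21 i'.1 i.1 hlt hik' hik, hOff22 i'.1 i.1 hlt hik' hik]
        ring
  refine Eq.trans (Finset.sum_congr rfl fun i _ =>
    Finset.sum_congr rfl fun i' _ => hval i i') ?_
  have hinner : ∀ i : Fin (n - k + 1),
      (∑ i' : Fin (n - k + 1), if i = i' then 2 - 2 * P ^ k else 0)
      = 2 - 2 * P ^ k := by
    intro i
    rw [Finset.sum_ite_eq]
    simp
  refine Eq.trans (Finset.sum_congr rfl fun i _ => hinner i) ?_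
  rw [Finset.sum_const, Finset.card_univ, Fintype.card_fin, nsmul_eq_mul]
  ring
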